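/- Let α > 0 and θ > 0, and let f(x) = x^{α−1} e^{−x/θ} / (Γ(α) θ^α) for x > 0 and f(x) = 0 otherwise, the density of the Gamma distribution with shape α and scale θ. Then −∫_ℝ f(x) log₂(|x| · f(x)) dx = α · log₂(e) · (1 − ψ(α)) + log₂ Γ(α), where Γ is the Gamma function and ψ is the digamma function. In particular this value does not depend on the scale parameter θ. -/

import Mathlib

open Real MeasureTheory

open Set Filter Asymptotics in
open scoped Topology in
lemma aux_integrable_log {α : ℝ} (hα : 0 < α) :
    IntegrableOn (fun t : ℝ => t ^ (α - 1) * (Real.log t * Real.exp (-t))) (Set.Ioi 0) := by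
  have hm := (mellin_hasDerivAt_of_isBigO_rpow (E := ℂ) (a := α + 1) (b := 0)
      (f := fun x : ℝ => ((Real.exp (-x) : ℝ) : ℂ)) (s := (α : ℂ))
      ?_ ?_ (by simpa using lt_add_one α) ?_ (by simpa using hα)).1
  · have h1 : Integrable
        (fun t : ℝ => (t:ℂ) ^ ((α:ℂ) - 1) • (Real.log t • ((Real.exp (-t) : ℝ) : ℂ)))
        (volume.restrict (Set.Ioi 0)) := by
      simpa [MellinConvergent, mul_comm, IntegrableOn] using hm
    refine (h1.re).congr ?_
    filter_upwards [ae_restrict_mem measurableSet_Ioi] with t ht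
    rw [show ((α:ℂ) - 1) = ((α - 1 : ℝ) : ℂ) by push_cast; ring, ← Complex.ofReal_cpow ht.le]
    simp [Complex.real_smul, smul_eq_mul, ← Complex.ofReal_mul]
    exact Or.inl (Or.inl (by rw [← Complex.ofReal_neg, Complex.exp_ofReal_re]))
  · refine (Continuous.continuousOn ?_).locallyIntegrableOn measurableSet_Ioi
    exact Complex.continuous_ofReal.comp (Real.continuous_exp.comp continuous_neg)
  · rw [← isBigO_norm_left]
    simp_rw [Complex.norm_real, isBigO_norm_left]
    simpa only [neg_one_mul] using (isLittleO_exp_neg_mul_rpow_atTop zero_lt_one _).isBigO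
  · simp_rw [neg_zero, Real.rpow_zero]
    refine isBigO_const_of_tendsto (?_ : Tendsto _ _ (𝓝 (1 : ℂ))) one_ne_zero
    rw [(by simp : (1 : ℂ) = Real.exp (-0))]
    exact (Complex.continuous_ofReal.comp
      (Real.continuous_exp.comp continuous_neg)).continuousWithinAt

open Set Filter in
open scoped Topology in
lemma aux_hasDerivAt_Gamma {α : ℝ} (hα : 0 < α) :
    HasDerivAt Real.Gamma
      (∫ t in Set.Ioi (0:ℝ), t ^ (α - 1) * (Real.log t * Real.exp (-t))) α := by
  have hc : HasDerivAt Complex.GammaIntegral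
      (∫ t : ℝ in Set.Ioi 0, (t:ℂ) ^ ((α:ℂ) - 1) * (Real.log t * Real.exp (-t))) (α:ℂ) :=
    Complex.hasDerivAt_GammaIntegral (by simpa using hα)
  have hmem : {z : ℂ | 0 < z.re} ∈ 𝓝 (α:ℂ) :=
    (isOpen_lt continuous_const Complex.continuous_re).mem_nhds (by simpa using hα)
  have hc2 : HasDerivAt Complex.Gamma
      (∫ t : ℝ in Set.Ioi 0, (t:ℂ) ^ ((α:ℂ) - 1) * (Real.log t * Real.exp (-t))) (α:ℂ) := by
    refine hc.congr_of_eventuallyEq ?_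
    filter_upwards [hmem] with z hz using Complex.Gamma_eq_integral hz
  have hD : (∫ t : ℝ in Set.Ioi 0, (t:ℂ) ^ ((α:ℂ) - 1) * (Real.log t * Real.exp (-t))) =
      ((∫ t in Set.Ioi (0:ℝ), t ^ (α - 1) * (Real.log t * Real.exp (-t)) : ℝ) : ℂ) := by
    rw [setIntegral_congr_fun measurableSet_Ioi (fun t ht => ?_)]
    · exact integral_ofReal
    · show (t:ℂ) ^ ((α:ℂ) - 1) * (Real.log t * Real.exp (-t)) =
        ((t ^ (α - 1) * (Real.log t * Real.exp (-t)) : ℝ) : ℂ)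
      rw [show ((α:ℂ) - 1) = ((α - 1 : ℝ) : ℂ) by push_cast; ring,
        ← Complex.ofReal_cpow (le_of_lt ht)]
      norm_cast
  have := hc2.real_of_complex
  rw [hD] at this
  simpa [Complex.Gamma_ofReal] using this

lemma aux_digamma_integral' {α : ℝ} (hα : 0 < α) :
    (∫ t in Set.Ioi (0:ℝ), t ^ (α - 1) * (Real.log t * Real.exp (-t)))
      = Real.Gamma α * (deriv (fun t => Real.log (Real.Gamma t)) α) := by
  have hG := aux_hasDerivAt_Gamma hα
  have hpos := Real.Gamma_pos_of_pos hα
  have hlog := hG.log hpos.ne'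
  rw [hlog.deriv]
  field_simp

/-- The digamma function `ψ(x) = d/dx log Γ(x)`. -/
noncomputable def digamma (x : ℝ) : ℝ := deriv (fun t => Real.log (Real.Gamma t)) x

/-- Differential floating-point entropy of the Gamma distribution. -/
theorem fp_entropy_gamma
    (α θ : ℝ) (hα : 0 < α) (hθ : 0 < θ)
    (f : ℝ → ℝ)
    (hf : ∀ x, f x = if 0 < x then
      x ^ (α - 1) * Real.exp (-x / θ) / (Real.Gamma α * θ ^ α) else 0) :
    -∫ x, f x * Real.logb 2 (|x| * f x)
      = α * Real.logb 2 (Real.exp 1) * (1 - digamma α)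
        + Real.logb 2 (Real.Gamma α) := by
  have hΓ := Real.Gamma_pos_of_pos hα
  have hθα : (0:ℝ) < θ ^ α := Real.rpow_pos_of_pos hθ α
  set c : ℝ := Real.Gamma α * θ ^ α with hc
  have hcpos : 0 < c := mul_pos hΓ hθα
  have hlog2 : Real.log 2 ≠ 0 := ne_of_gt (Real.log_pos one_lt_two)
  have h0 : ∀ x : ℝ, x ∉ Set.Ioi (0:ℝ) → f x * Real.logb 2 (|x| * f x) = 0 := by
    intro x hx
    rw [hf x, if_neg (by simpa using hx)]
    simp
  rw [← setIntegral_eq_integral_of_forall_compl_eq_zero h0]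
  have hsub := integral_comp_mul_left_Ioi (fun x => f x * Real.logb 2 (|x| * f x)) 0 hθ
  rw [mul_zero] at hsub
  have h2 : ∫ x in Set.Ioi (0:ℝ), f x * Real.logb 2 (|x| * f x)
      = θ * ∫ u in Set.Ioi (0:ℝ), f (θ * u) * Real.logb 2 (|θ * u| * f (θ * u)) := by
    rw [hsub, smul_eq_mul, ← mul_assoc, mul_inv_cancel₀ hθ.ne', one_mul]
  rw [h2]
  set K1 : ℝ := θ ^ (α - 1) * (α * Real.log θ - Real.log c) / (c * Real.log 2) with hK1
  set K2 : ℝ := -(θ ^ (α - 1) / (c * Real.log 2)) with hK2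
  set K3 : ℝ := α * θ ^ (α - 1) / (c * Real.log 2) with hK3
  have hθθ : θ * θ ^ (α - 1) = θ ^ α := by
    rw [mul_comm, ← Real.rpow_add_one hθ.ne']
    congr 1
    ring
  have hpt : ∀ u ∈ Set.Ioi (0:ℝ),
      f (θ * u) * Real.logb 2 (|θ * u| * f (θ * u))
        = K1 * (Real.exp (-u) * u ^ (α - 1)) + K2 * (Real.exp (-u) * u ^ (α + 1 - 1))
          + K3 * (u ^ (α - 1) * (Real.log u * Real.exp (-u))) := by
    intro u hu
    have hu : (0:ℝ) < u := hu
    have htu : 0 < θ * u := mul_pos hθ hu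
    rw [hf (θ * u), if_pos htu]
    have e1 : -(θ * u) / θ = -u := by
      rw [mul_comm, neg_div, mul_div_assoc, div_self hθ.ne', mul_one]
    have e2 : (θ * u) ^ (α - 1) = θ ^ (α - 1) * u ^ (α - 1) := Real.mul_rpow hθ.le hu.le
    have huu : u * u ^ (α - 1) = u ^ α := by
      rw [mul_comm, ← Real.rpow_add_one hu.ne']
      congr 1
      ring
    have e4 : |θ * u| * ((θ*u) ^ (α-1) * Real.exp (-(θ*u)/θ) / c)
        = θ ^ α * u ^ α * Real.exp (-u) / c := by
      rw [abs_of_pos htu, e1, e2, ← hθθ, ← huu]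
      ring
    have e5 : Real.logb 2 (θ ^ α * u ^ α * Real.exp (-u) / c)
        = (α * Real.log θ + α * Real.log u - u - Real.log c) / Real.log 2 := by
      rw [Real.logb, Real.log_div (by positivity) hcpos.ne',
        Real.log_mul (by positivity) (Real.exp_ne_zero _),
        Real.log_mul (by positivity) (by positivity), Real.log_rpow hθ, Real.log_rpow hu,
        Real.log_exp]
      ring
    rw [e4, e5, e1, e2]
    have e6 : u ^ (α + 1 - 1) = u ^ (α - 1) * u := by
      rw [show α + 1 - 1 = (α - 1) + 1 by ring, Real.rpow_add_one hu.ne']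
    rw [e6, hK1, hK2, hK3]
    field_simp
    ring
  rw [setIntegral_congr_fun measurableSet_Ioi hpt]
  have i1 : IntegrableOn (fun u : ℝ => Real.exp (-u) * u ^ (α - 1)) (Set.Ioi 0) :=
    Real.GammaIntegral_convergent hα
  have i2 : IntegrableOn (fun u : ℝ => Real.exp (-u) * u ^ (α + 1 - 1)) (Set.Ioi 0) :=
    Real.GammaIntegral_convergent (by linarith)
  have i3 := aux_integrable_log hα
  have i12 : Integrable (fun u : ℝ => K1 * (Real.exp (-u) * u ^ (α - 1))
      + K2 * (Real.exp (-u) * u ^ (α + 1 - 1))) (volume.restrict (Set.Ioi 0)) :=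
    (i1.const_mul K1).add (i2.const_mul K2)
  rw [integral_add i12 (i3.const_mul K3),
      integral_add (i1.const_mul K1) (i2.const_mul K2),
      integral_const_mul, integral_const_mul, integral_const_mul,
      ← Real.Gamma_eq_integral hα, ← Real.Gamma_eq_integral (show (0:ℝ) < α + 1 by linarith),
      aux_digamma_integral' hα, Real.Gamma_add_one hα.ne']
  have hlogc : Real.log c = Real.log (Real.Gamma α) + α * Real.log θ := by
    rw [hc, Real.log_mul hΓ.ne' hθα.ne', Real.log_rpow hθ]
  have h6 : θ ^ (α - 1) = θ ^ α / θ := by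
    rw [← hθθ]
    field_simp
  have key : θ * (K1 * Real.Gamma α + K2 * (α * Real.Gamma α)
      + K3 * (Real.Gamma α * (deriv (fun t => Real.log (Real.Gamma t)) α)))
      = (α * (deriv (fun t => Real.log (Real.Gamma t)) α) - α
          - Real.log (Real.Gamma α)) / Real.log 2 := by
    rw [hK1, hK2, hK3, hlogc, hc, h6]
    field_simp
    ring
  rw [key]
  show _ = α * Real.logb 2 (Real.exp 1) * (1 - deriv (fun t => Real.log (Real.Gamma t)) α)
        + Real.logb 2 (Real.Gamma α)
  rw [Real.logb, Real.logb, Real.log_exp]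
  field_simp
  ring
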